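/- Let G be a finite abelian group of odd order and let S ⊆ G be a generating subset such that Ŝ = S ∪ {0} ∪ (−S) has a Vosper-representation, i.e., there exists a subgroup H of G with |Ŝ + H| < min(|G|, |Ŝ| + |H|) such that the image of Ŝ under the canonical map φ : G → G/H is a Vosper subset of G/H. Then S is super faithful, i.e., for every integer j ≥ 1, |jŜ| ≥ min(|G|, j(|Ŝ| + 1) − 1), where jŜ denotes the j-fold sumset Ŝ + ⋯ + Ŝ. -/

import Mathlib

open Finset Pointwise

/-- The `j`-fold sumset `S + ⋯ + S` (with `0`-fold sumset `{0}`). -/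
def iterSumset {G : Type*} [AddCommGroup G] [DecidableEq G] (S : Finset G) : ℕ → Finset G
  | 0 => {0}
  | n + 1 => iterSumset S n + S

/-- A subset `X` of a finite abelian group `H` is a Vosper subset of `H` if for every
`Y ⊆ H` with `|Y| ≥ 2` one has `|X + Y| ≥ min (|H| - 1) (|X| + |Y|)`. -/
def IsVosper {H : Type*} [AddCommGroup H] (X : Set H) : Prop :=
  ∀ Y : Set H, 2 ≤ Y.ncard → min (Nat.card H - 1) (X.ncard + Y.ncard) ≤ (X + Y).ncard

section Aux

variable {G : Type*} [AddCommGroup G] [DecidableEq G]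

lemma aux_no2tor {G : Type*} [AddCommGroup G] (hodd : Odd (Nat.card G)) (g : G)
    (hg : -g = g) : g = 0 := by
  have h2 : 2 • g = 0 := by rw [two_nsmul]; nth_rewrite 1 [← hg]; exact neg_add_cancel g
  have hd : addOrderOf g ∣ 2 := addOrderOf_dvd_iff_nsmul_eq_zero.mpr h2
  have hc : addOrderOf g ∣ Nat.card G := addOrderOf_dvd_natCard g
  rcases (Nat.dvd_prime Nat.prime_two).mp hd with h | h
  · exact AddMonoid.addOrderOf_eq_one_iff.mp h
  · rw [h] at hc
    exact absurd (hodd.of_dvd_nat hc) (by decide)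

lemma aux_even_card_symm (htor : ∀ g : G, -g = g → g = 0) :
    ∀ s : Finset G, 0 ∉ s → (∀ a ∈ s, -a ∈ s) → Even s.card := by
  intro s
  induction s using Finset.strongInduction with
  | _ s ih =>
    intro h0 hsym
    rcases s.eq_empty_or_nonempty with rfl | ⟨a, ha⟩
    · simp
    · have hna : -a ∈ s := hsym a ha
      have hane : a ≠ -a := fun h => h0 (by rwa [htor a h.symm] at ha)
      have h0' : (0:G) ∉ s \ {a, -a} := fun h => h0 (Finset.mem_sdiff.mp h).1
      have hsub : s \ {a, -a} ⊂ s := by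
        apply Finset.sdiff_ssubset _ (by simp)
        intro x hx
        simp at hx
        rcases hx with rfl | rfl <;> assumption
      have hsym' : ∀ b ∈ s \ {a, -a}, -b ∈ s \ {a, -a} := by
        intro b hb
        simp only [Finset.mem_sdiff, Finset.mem_insert, Finset.mem_singleton] at hb ⊢
        refine ⟨hsym b hb.1, ?_⟩
        push_neg at hb ⊢
        refine ⟨fun h => hb.2.2 (by rw [← h, neg_neg]),
          fun h => hb.2.1 (by rw [← neg_neg b, h, neg_neg])⟩
      have := ih _ hsub h0' hsym'
      have hcard : s.card = (s \ {a, -a}).card + 2 := by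
        rw [Finset.card_sdiff_of_subset (by intro x hx; simp at hx; rcases hx with rfl | rfl <;> assumption)]
        rw [Finset.card_pair hane]
        have h2 : 2 ≤ s.card := by
          have hss : ({a, -a} : Finset G) ⊆ s := by
            intro x hx; simp at hx; rcases hx with rfl | rfl <;> assumption
          calc 2 = ({a, -a} : Finset G).card := (Finset.card_pair hane).symm
          _ ≤ s.card := Finset.card_le_card hss
        omega
      rw [hcard]
      exact this.add (by decide)

lemma aux_odd_card_symm (htor : ∀ g : G, -g = g → g = 0) (s : Finset G) (h0 : 0 ∈ s)
    (hsym : ∀ a ∈ s, -a ∈ s) : Odd s.card := by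
  have he : Even (s.erase 0).card := by
    apply aux_even_card_symm htor _ (Finset.notMem_erase 0 s)
    intro a ha
    rw [Finset.mem_erase] at ha ⊢
    exact ⟨fun h => ha.1 (by rw [← neg_neg a, h, neg_zero]), hsym a ha.2⟩
  have hc := Finset.card_erase_add_one h0
  rcases he with ⟨k, hk⟩
  exact ⟨k, by omega⟩

lemma aux_zero_mem_iterSumset {S : Finset G} (h0 : (0:G) ∈ S) : ∀ j, (0:G) ∈ iterSumset S j
  | 0 => by simp [iterSumset]
  | (j+1) => by
      have h := aux_zero_mem_iterSumset h0 j
      have := Finset.add_mem_add h h0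
      rw [add_zero] at this; exact this

lemma aux_neg_mem_iterSumset {S : Finset G} (hs : ∀ a ∈ S, -a ∈ S) :
    ∀ j, ∀ a ∈ iterSumset S j, -a ∈ iterSumset S j
  | 0 => by simp [iterSumset]
  | (j+1) => by
      intro a ha
      rw [iterSumset, Finset.mem_add] at ha ⊢
      obtain ⟨b, hb, c, hc, rfl⟩ := ha
      exact ⟨-b, aux_neg_mem_iterSumset hs j b hb, -c, hs c hc, by abel⟩

lemma aux_image_iterSumset {Q : Type*} [AddCommGroup Q] [DecidableEq Q] (f : G →+ Q)
    (S : Finset G) : ∀ j, (iterSumset S j).image f = iterSumset (S.image f) j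
  | 0 => by simp [iterSumset]
  | (j+1) => by
      rw [iterSumset, iterSumset, ← aux_image_iterSumset f S j, Finset.image_add]

lemma aux_iterSumset_one (S : Finset G) : iterSumset S 1 = S := by
  show iterSumset S 0 + S = S
  simp [iterSumset, Finset.singleton_add]

lemma aux_pigeon {H : AddSubgroup G} [Fintype G] (A B : Finset G)
    (hA : ∀ a ∈ A, a ∈ H) (hB : ∀ b ∈ B, b ∈ H) (hcard : Nat.card H < A.card + B.card)
    {c : G} (hc : c ∈ H) : ∃ a ∈ A, ∃ b ∈ B, a + b = c := by
  classical
  by_contra hcon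
  push_neg at hcon
  set C := B.image (fun b => c - b) with hC
  have hCcard : C.card = B.card := Finset.card_image_of_injective _ (sub_right_injective)
  have hdisj : Disjoint A C := by
    rw [Finset.disjoint_right]
    intro x hx hxA
    rw [hC, Finset.mem_image] at hx
    obtain ⟨b, hb, rfl⟩ := hx
    exact hcon _ hxA _ hb (by abel)
  have hsub : A ∪ C ⊆ (H : Set G).toFinset := by
    intro x hx
    rw [Set.mem_toFinset]
    rcases Finset.mem_union.mp hx with h | h
    · exact hA x h
    · rw [hC, Finset.mem_image] at h
      obtain ⟨b, hb, rfl⟩ := h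
      exact sub_mem hc (hB b hb)
  have hle := Finset.card_le_card hsub
  rw [Finset.card_union_of_disjoint hdisj, hCcard] at hle
  rw [Set.toFinset_card] at hle
  have hn : Nat.card H = Fintype.card (H : Set G) := by
    rw [Nat.card_eq_fintype_card]; exact Fintype.card_congr (Equiv.refl _)
  omega

lemma aux_ncard_preimage {G : Type*} [AddCommGroup G] [Fintype G] (H : AddSubgroup G)
    (s : Set (G ⧸ H)) :
    ((QuotientAddGroup.mk' H) ⁻¹' s).ncard = Nat.card H * s.ncard := by
  have he := QuotientAddGroup.preimageMkEquivAddSubgroupProdSet H s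
  have h : (QuotientAddGroup.mk' H) ⁻¹' s = (QuotientAddGroup.mk : G → G ⧸ H) ⁻¹' s := rfl
  rw [h, ← Nat.card_coe_set_eq, Nat.card_congr he, Nat.card_prod, Nat.card_coe_set_eq]

end Aux

theorem stmt_19 {G : Type*} [AddCommGroup G] [Fintype G] [DecidableEq G]
    (hodd : Odd (Fintype.card G)) (S : Finset G)
    (hgen : AddSubgroup.closure (S : Set G) = ⊤)
    (hV : ∃ H : AddSubgroup G,
      ((↑(S ∪ {0} ∪ S.image (fun x => -x)) : Set G) + (H : Set G)).ncard <
        min (Fintype.card G) ((S ∪ {0} ∪ S.image (fun x => -x)).card + Nat.card H) ∧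
      IsVosper ((QuotientAddGroup.mk' H) '' (↑(S ∪ {0} ∪ S.image (fun x => -x)) : Set G))) :
    ∀ j : ℕ, 1 ≤ j →
      min (Fintype.card G) (j * ((S ∪ {0} ∪ S.image (fun x => -x)).card + 1) - 1)
        ≤ (iterSumset (S ∪ {0} ∪ S.image (fun x => -x)) j).card := by
  classical
  obtain ⟨H, hcard, hVos⟩ := hV
  set T : Finset G := S ∪ {0} ∪ S.image (fun x => -x) with hTdef
  haveI : DecidableEq (G ⧸ H) := Classical.decEq _
  haveI : Fintype (G ⧸ H) := Fintype.ofFinite _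
  set φ : G →+ G ⧸ H := QuotientAddGroup.mk' H with hφdef
  set X : Finset (G ⧸ H) := T.image φ with hXdef
  set q : ℕ := Nat.card (G ⧸ H) with hqdef
  set hh : ℕ := Nat.card H with hhdef
  -- basic facts about T
  have hT0 : (0:G) ∈ T := by simp [hTdef]
  have hTsym : ∀ a ∈ T, -a ∈ T := by
    intro a ha
    simp only [hTdef, Finset.mem_union, Finset.mem_image, Finset.mem_singleton] at ha ⊢
    rcases ha with (hs | rfl) | ⟨b, hb, rfl⟩
    · exact Or.inr ⟨a, hs, rfl⟩
    · exact Or.inl (Or.inr (by simp))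
    · exact Or.inl (Or.inl (by rwa [neg_neg]))
  -- torsion-freeness facts
  have hoddN : Odd (Nat.card G) := by rwa [Nat.card_eq_fintype_card]
  have hGqh : Fintype.card G = q * hh := by
    rw [← Nat.card_eq_fintype_card, hqdef, hhdef]
    exact AddSubgroup.card_eq_card_quotient_mul_card_addSubgroup H
  have hqodd : Odd q := by
    rcases hoddN.of_dvd_nat ⟨hh, by rw [← hGqh, Nat.card_eq_fintype_card]⟩ with h
    exact h
  have htorQ : ∀ g : G ⧸ H, -g = g → g = 0 := fun g hg => aux_no2tor hqodd g hg
  -- X facts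
  have hX0 : (0 : G ⧸ H) ∈ X := by
    rw [hXdef, Finset.mem_image]; exact ⟨0, hT0, map_zero φ⟩
  have hXsym : ∀ ξ ∈ X, -ξ ∈ X := by
    intro ξ hξ
    rw [hXdef, Finset.mem_image] at hξ ⊢
    obtain ⟨a, ha, rfl⟩ := hξ
    exact ⟨-a, hTsym a ha, map_neg φ a⟩
  have hxodd : Odd X.card := aux_odd_card_symm htorQ X hX0 hXsym
  -- the coset count : |T + H| = hh * |X|
  have hTHset : (↑T + (H : Set G)) = φ ⁻¹' (↑X : Set (G ⧸ H)) := by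
    ext g
    simp only [Set.mem_add, Set.mem_preimage, hXdef, Finset.coe_image, Set.mem_image,
      Finset.mem_coe, SetLike.mem_coe]
    constructor
    · rintro ⟨t, ht, k, hk, rfl⟩
      refine ⟨t, ht, ?_⟩
      have : φ (t + k) = φ t + φ k := map_add φ t k
      have hk0 : φ k = 0 := (QuotientAddGroup.eq_zero_iff k).mpr hk
      rw [this, hk0, add_zero]
    · rintro ⟨t, ht, hteq⟩
      refine ⟨t, ht, g - t, ?_, by abel⟩
      have : φ (g - t) = 0 := by rw [map_sub, hteq, sub_self]
      exact (QuotientAddGroup.eq_zero_iff (g - t)).mp this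
  have hTHcard : (↑T + (H : Set G)).ncard = hh * X.card := by
    rw [hTHset, aux_ncard_preimage H, Set.ncard_coe_finset]
  -- extract the two inequalities from hcard
  rw [hTHcard, lt_min_iff] at hcard
  obtain ⟨hc1, hc2⟩ := hcard
  -- hc1 : hh * X.card < Fintype.card G ;  hc2 : hh * X.card < T.card + hh
  have hh1 : 1 ≤ hh := Nat.card_pos
  have hq1 : 1 ≤ q := Nat.card_pos
  have hxq : X.card < q := by
    by_contra hcon
    push_neg at hcon
    have : q * hh ≤ hh * X.card := by
      rw [mul_comm]
      exact Nat.mul_le_mul_left hh hcon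
    omega
  -- x ≥ 3
  have hx3 : 3 ≤ X.card := by
    rcases Nat.lt_or_ge X.card 3 with hlt | hge
    · exfalso
      have hx1 : X.card = 1 := by
        rcases hxodd with ⟨k, hk⟩
        have : 0 < X.card := Finset.card_pos.mpr ⟨0, hX0⟩
        omega
      -- then X = {0} and T ⊆ H, contradiction with generation
      have hXeq : X = {0} := by
        apply Finset.eq_singleton_iff_unique_mem.mpr
        refine ⟨hX0, fun y hy => ?_⟩
        have := Finset.card_le_one.mp (le_of_eq hx1) y hy 0 hX0
        exact this
      have hTH' : ∀ a ∈ T, a ∈ H := by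
        intro a ha
        have : φ a ∈ X := by rw [hXdef, Finset.mem_image]; exact ⟨a, ha, rfl⟩
        rw [hXeq, Finset.mem_singleton] at this
        exact (QuotientAddGroup.eq_zero_iff a).mp this
      have hST : (S : Set G) ⊆ (H : Set G) := by
        intro a ha
        exact hTH' a (by simp [hTdef, Finset.mem_coe.mp ha])
      have : (⊤ : AddSubgroup G) ≤ H := by
        rw [← hgen]
        exact (AddSubgroup.closure_le H).mpr hST
      have hHtop : H = ⊤ := top_le_iff.mp this
      have hhcard : hh = Fintype.card G := by
        rw [hhdef, hHtop, ← Nat.card_eq_fintype_card]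
        exact AddSubgroup.card_top
      rw [hx1, mul_one] at hc1
      omega
    · exact hge
  have hq4 : 4 ≤ q := by omega
  have hXcoe : ((φ : G → G ⧸ H) '' (↑T : Set G)) = (↑X : Set (G ⧸ H)) :=
    (Finset.coe_image).symm
  -- growth of iterated sumsets in the quotient
  have growth : ∀ j, 1 ≤ j → min q (j * X.card + (j - 1)) ≤ (iterSumset X j).card := by
    intro j hj
    induction j, hj using Nat.le_induction with
    | base =>
      rw [aux_iterSumset_one]
      simpa using min_le_right q X.card
    | succ n hn ih =>
      have h0n : (0 : G ⧸ H) ∈ iterSumset X n := aux_zero_mem_iterSumset hX0 n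
      have hsymn : ∀ a ∈ iterSumset X n, -a ∈ iterSumset X n := aux_neg_mem_iterSumset hXsym n
      have hoddn : Odd (iterSumset X n).card := aux_odd_card_symm htorQ _ h0n hsymn
      have hoddn1 : Odd (iterSumset X (n+1)).card :=
        aux_odd_card_symm htorQ _ (aux_zero_mem_iterSumset hX0 (n+1))
          (aux_neg_mem_iterSumset hXsym (n+1))
      have hnx : X.card ≤ n * X.card := Nat.le_mul_of_pos_left X.card (by omega)
      have hY2 : 2 ≤ (↑(iterSumset X n) : Set (G ⧸ H)).ncard := by
        rw [Set.ncard_coe_finset]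
        omega
      have hv := hVos (↑(iterSumset X n) : Set (G ⧸ H)) hY2
      rw [hXcoe, Set.ncard_coe_finset, Set.ncard_coe_finset, ← Finset.coe_add,
        Set.ncard_coe_finset] at hv
      have hadd : X + iterSumset X n = iterSumset X (n+1) := by
        show X + iterSumset X n = iterSumset X n + X
        exact add_comm _ _
      rw [hadd] at hv
      have hub : (iterSumset X (n+1)).card ≤ q := by
        calc (iterSumset X (n+1)).card ≤ Fintype.card (G ⧸ H) := Finset.card_le_univ _
        _ = q := (Nat.card_eq_fintype_card).symm
      rw [add_one_mul]
      generalize hB : n * X.card = B at ih hnx ⊢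
      rcases hoddn with ⟨k1, hk1⟩
      rcases hoddn1 with ⟨k2, hk2⟩
      rcases hqodd with ⟨k3, hk3⟩
      rcases hxodd with ⟨k4, hk4⟩
      omega
  -- finset versions of H and of T + H
  set KF : Finset G := Finset.univ.filter (fun g => g ∈ H) with hKFdef
  have hKFcoe : (↑KF : Set G) = (H : Set G) := by ext g; simp [hKFdef]
  set F : (G ⧸ H) → Finset G := fun ξ => Finset.univ.filter (fun g => φ g = ξ) with hFdef
  set P : (G ⧸ H) → Finset G := fun ξ => T.filter (fun g => φ g = ξ) with hPdef
  have hFmem : ∀ ξ, ∀ g : G, g ∈ F ξ ↔ φ g = ξ := by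
    intro ξ g; simp [hFdef]
  have hPmem : ∀ ξ, ∀ g : G, g ∈ P ξ ↔ g ∈ T ∧ φ g = ξ := by
    intro ξ g; simp [hPdef]
  have hFcard : ∀ ξ, (F ξ).card = hh := by
    intro ξ
    have hcoe : (↑(F ξ) : Set G) = φ ⁻¹' {ξ} := by
      ext g; simp [hFdef]
    have h2 := aux_ncard_preimage H ({ξ} : Set (G ⧸ H))
    rw [← hcoe, Set.ncard_coe_finset, Set.ncard_singleton, mul_one] at h2
    exact h2
  set TH : Finset G := T + KF with hTHdef
  have hTHcoe : (↑TH : Set G) = ↑T + (H : Set G) := by rw [hTHdef, Finset.coe_add, hKFcoe]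
  have hTHcardF : TH.card = hh * X.card := by
    rw [← Set.ncard_coe_finset, hTHcoe, hTHcard]
  have hTsubTH : T ⊆ TH := by
    intro g hg
    have h0K : (0:G) ∈ KF := by simp [hKFdef]
    have h2 := Finset.add_mem_add hg h0K
    rwa [add_zero] at h2
  have htle : T.card ≤ hh * X.card := hTHcardF ▸ Finset.card_le_card hTsubTH
  have hPsubF : ∀ ξ, P ξ ⊆ F ξ := by
    intro ξ g hg
    rw [hPmem] at hg
    rw [hFmem]
    exact hg.2
  have hPle : ∀ ξ, (P ξ).card ≤ hh := fun ξ => (hFcard ξ) ▸ Finset.card_le_card (hPsubF ξ)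
  have hFsubTH : ∀ ξ ∈ X, F ξ ⊆ TH := by
    intro ξ hξ g hg
    rw [hFmem] at hg
    rw [hXdef, Finset.mem_image] at hξ
    obtain ⟨t, ht, rfl⟩ := hξ
    have hgt : g - t ∈ H := by
      apply (QuotientAddGroup.eq_zero_iff (g - t)).mp
      show φ (g - t) = 0
      rw [map_sub, hg, sub_self]
    have : g = t + (g - t) := by abel
    rw [hTHdef, this]
    exact Finset.add_mem_add ht (by simp [hKFdef]; exact hgt)
  have hDsub : ∀ ξ ∈ X, (F ξ \ P ξ) ⊆ TH \ T := by
    intro ξ hξ g hg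
    rw [Finset.mem_sdiff] at hg ⊢
    refine ⟨hFsubTH ξ hξ hg.1, fun hgT => hg.2 ?_⟩
    rw [hPmem]
    exact ⟨hgT, (hFmem ξ g).mp hg.1⟩
  have hDcard : ∀ ξ, (F ξ \ P ξ).card = hh - (P ξ).card := by
    intro ξ
    rw [Finset.card_sdiff_of_subset (hPsubF ξ), hFcard]
  have hTHTcard : (TH \ T).card = hh * X.card - T.card := by
    rw [Finset.card_sdiff_of_subset hTsubTH, hTHcardF]
  have hDdisj : ∀ ξ η : G ⧸ H, ξ ≠ η → Disjoint (F ξ \ P ξ) (F η \ P η) := by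
    intro ξ η hne
    rw [Finset.disjoint_left]
    intro g hg hg'
    rw [Finset.mem_sdiff, hFmem] at hg hg'
    exact hne (hg.1 ▸ hg'.1 ▸ rfl)
  have hsplit : ∀ ξ ∈ X, ∀ η ∈ X, ξ ≠ η → hh < (P ξ).card + (P η).card := by
    intro ξ hξ η hη hne
    have hu : (F ξ \ P ξ) ∪ (F η \ P η) ⊆ TH \ T :=
      Finset.union_subset (hDsub ξ hξ) (hDsub η hη)
    have hc := Finset.card_le_card hu
    rw [Finset.card_union_of_disjoint (hDdisj ξ η hne), hDcard, hDcard, hTHTcard] at hc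
    have h1 := hPle ξ
    have h2 := hPle η
    omega
  have hDneg : ∀ ξ : G ⧸ H, (F ξ \ P ξ).card ≤ (F (-ξ) \ P (-ξ)).card := by
    intro ξ
    apply Finset.card_le_card_of_injOn (fun g => -g)
    · intro g hg
      rw [Finset.mem_coe, Finset.mem_sdiff, hFmem] at hg
      rw [Finset.mem_coe, Finset.mem_sdiff, hFmem]
      constructor
      · rw [map_neg, hg.1]
      · intro hcon
        rw [hPmem] at hcon
        apply hg.2
        rw [hPmem]
        refine ⟨?_, hg.1⟩
        have := hTsym _ hcon.1
        rwa [neg_neg] at this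
    · intro a _ b _ hab
      exact neg_injective hab
  have hsame : ∀ ξ ∈ X, ξ ≠ 0 → hh < 2 * (P ξ).card := by
    intro ξ hξ hξ0
    have hnξ : -ξ ∈ X := hXsym ξ hξ
    have hne : ξ ≠ -ξ := fun h => hξ0 (htorQ ξ h.symm)
    have hu : (F ξ \ P ξ) ∪ (F (-ξ) \ P (-ξ)) ⊆ TH \ T :=
      Finset.union_subset (hDsub ξ hξ) (hDsub (-ξ) hnξ)
    have hc := Finset.card_le_card hu
    rw [Finset.card_union_of_disjoint (hDdisj ξ (-ξ) hne), hDcard, hDcard, hTHTcard] at hc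
    have he1 := hDneg ξ
    have he2 := hDneg (-ξ)
    rw [neg_neg] at he2
    rw [hDcard, hDcard] at he1 he2
    have h1 := hPle ξ
    have h2 := hPle (-ξ)
    omega
  -- pairing lemma
  have hDD : ∀ a ∈ T, ∀ b ∈ T, ∀ g : G, g - a - b ∈ H →
      hh < (P (φ a)).card + (P (φ b)).card → g ∈ T + T := by
    intro a ha b hb g hg hcard'
    have hA : ∀ p ∈ (P (φ a)).image (fun p => p - a), p ∈ H := by
      intro p hp
      rw [Finset.mem_image] at hp
      obtain ⟨p', hp', rfl⟩ := hp
      rw [hPmem] at hp'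
      apply (QuotientAddGroup.eq_zero_iff _).mp
      show φ (p' - a) = 0
      rw [map_sub, hp'.2, sub_self]
    have hB : ∀ p ∈ (P (φ b)).image (fun p => p - b), p ∈ H := by
      intro p hp
      rw [Finset.mem_image] at hp
      obtain ⟨p', hp', rfl⟩ := hp
      rw [hPmem] at hp'
      apply (QuotientAddGroup.eq_zero_iff _).mp
      show φ (p' - b) = 0
      rw [map_sub, hp'.2, sub_self]
    have hcA : ((P (φ a)).image (fun p => p - a)).card = (P (φ a)).card :=
      Finset.card_image_of_injective _ (sub_left_injective)
    have hcB : ((P (φ b)).image (fun p => p - b)).card = (P (φ b)).card :=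
      Finset.card_image_of_injective _ (sub_left_injective)
    obtain ⟨u, hu, v, hv, huv⟩ := aux_pigeon _ _ hA hB (by omega) hg
    rw [Finset.mem_image] at hu hv
    obtain ⟨p, hp, rfl⟩ := hu
    obtain ⟨p', hp', rfl⟩ := hv
    rw [hPmem] at hp hp'
    have hgeq : g = p + p' := by
      have h3 : p - a + (p' - b) = g - a - b := huv
      have h4 : g - a - b + (a + b) = p - a + (p' - b) + (a + b) := by rw [h3]
      calc g = g - a - b + (a + b) := by abel
      _ = p - a + (p' - b) + (a + b) := h4
      _ = p + p' := by abel
    rw [hgeq]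
    exact Finset.add_mem_add hp.1 hp'.1
  -- the j = 2 full-coset claim
  have claim2 : ∀ g : G, φ g ∈ X + X → g ∈ T + T := by
    intro g hg
    rw [Finset.mem_add] at hg
    obtain ⟨ξ, hξ, η, hη, hsum⟩ := hg
    have hξ' := hξ
    have hη' := hη
    rw [hXdef, Finset.mem_image] at hξ' hη'
    obtain ⟨a, ha, rfl⟩ := hξ'
    obtain ⟨b, hb, rfl⟩ := hη'
    have hgH : g - a - b ∈ H := by
      apply (QuotientAddGroup.eq_zero_iff _).mp
      show φ (g - a - b) = 0
      rw [map_sub, map_sub, ← hsum]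
      abel
    by_cases hab : φ a = φ b
    · by_cases ha0 : φ a = 0
      · -- both zero : g ∈ H, use a nonzero class
        obtain ⟨ζ, hζ, hζne⟩ := Finset.exists_mem_ne (by omega : 1 < X.card) 0
        have hζ' := hζ
        rw [hXdef, Finset.mem_image] at hζ'
        obtain ⟨e, he, rfl⟩ := hζ'
        have hne : φ e ≠ φ (-e) := by
          rw [map_neg]
          intro hcon
          exact hζne (htorQ (φ e) hcon.symm)
        have hgH' : g - e - (-e) ∈ H := by
          have hb0 : φ b = 0 := by rw [← hab]; exact ha0
          have hg0 : φ g = 0 := by rw [← hsum, ha0, hb0, add_zero]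
          have hgg : g - e - (-e) = g := by abel
          rw [hgg]
          exact (QuotientAddGroup.eq_zero_iff g).mp hg0
        exact hDD e he (-e) (hTsym e he) g hgH'
          (hsplit (φ e) hζ (φ (-e)) (by rw [map_neg]; exact hXsym _ hζ) hne)
      · have hkey := hsame (φ a) hξ ha0
        apply hDD a ha b hb g hgH
        rw [← hab]
        omega
    · exact hDD a ha b hb g hgH (hsplit (φ a) hξ (φ b) hη hab)
  -- full-coset claim for all j ≥ 2
  have claimE : ∀ j, 2 ≤ j → ∀ g : G, φ g ∈ iterSumset X j → g ∈ iterSumset T j := by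
    intro j hj
    induction j, hj using Nat.le_induction with
    | base =>
      intro g hg
      have h2X : iterSumset X 2 = X + X := by
        show iterSumset X 1 + X = X + X
        rw [aux_iterSumset_one]
      have h2T : iterSumset T 2 = T + T := by
        show iterSumset T 1 + T = T + T
        rw [aux_iterSumset_one]
      rw [h2X] at hg
      rw [h2T]
      exact claim2 g hg
    | succ n hn ih =>
      intro g hg
      have hrw : iterSumset X (n+1) = iterSumset X n + X := rfl
      rw [hrw, Finset.mem_add] at hg
      obtain ⟨d, hd, ξ, hξ, hsum⟩ := hg
      rw [hXdef, Finset.mem_image] at hξ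
      obtain ⟨a, ha, rfl⟩ := hξ
      have hga : φ (g - a) ∈ iterSumset X n := by
        rw [map_sub]
        have heq : φ g - φ a = d := by rw [← hsum]; abel
        rw [heq]; exact hd
      have hmem : g - a + a ∈ iterSumset T n + T := Finset.add_mem_add (ih (g - a) hga) ha
      rw [sub_add_cancel] at hmem
      exact hmem
  -- final assembly
  intro j hj
  rcases Nat.eq_or_lt_of_le hj with h1 | h2
  · rw [← h1, aux_iterSumset_one]
    have hrw : 1 * (T.card + 1) - 1 = T.card := by omega
    rw [hrw]
    exact min_le_right _ _
  · have hj2 : 2 ≤ j := h2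
    have hpre : (φ ⁻¹' (↑(iterSumset X j) : Set (G ⧸ H))) ⊆ ↑(iterSumset T j) := by
      intro g hg
      exact claimE j hj2 g (by simpa using hg)
    have hcard1 : hh * (iterSumset X j).card ≤ (iterSumset T j).card := by
      have hmono := Set.ncard_le_ncard hpre (Set.toFinite _)
      rwa [aux_ncard_preimage, Set.ncard_coe_finset, Set.ncard_coe_finset] at hmono
    have hgrow := growth j hj
    rcases le_or_gt q (j * X.card + (j - 1)) with hcase | hcase
    · have haq : q ≤ (iterSumset X j).card := by omega
      have hle : Fintype.card G ≤ hh * (iterSumset X j).card := by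
        rw [hGqh, mul_comm]
        exact Nat.mul_le_mul_left hh haq
      exact le_trans (min_le_left _ _) (le_trans hle hcard1)
    · have haj : j * X.card + (j - 1) ≤ (iterSumset X j).card := by omega
      have hkey : j * (T.card + 1) - 1 ≤ hh * (iterSumset X j).card := by
        have e1 : j * T.card ≤ j * (hh * X.card) := Nat.mul_le_mul_left j htle
        have e2 : hh * (j * X.card + (j - 1)) ≤ hh * (iterSumset X j).card :=
          Nat.mul_le_mul_left hh haj
        have e3 : hh * (j * X.card + (j - 1)) = j * (hh * X.card) + hh * (j - 1) := by ring
        have e4 : j - 1 ≤ hh * (j - 1) := Nat.le_mul_of_pos_left (j - 1) (by omega)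
        rw [Nat.mul_add, mul_one]
        omega
      exact le_trans (min_le_right _ _) (le_trans hkey hcard1)
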